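/- Fix real parameters a3, a6, a7, b1, b2, w1, w2 and write |b-w|^2 = (b1-w1)^2 + (b2-w2)^2. If x ∈ ℝ^6 is a singular configuration of the subsystem 367 (i.e. H(x) = 0 and the 5×6 Jacobian matrix of H at x has rank strictly less than 5), then a6·a7·c6 = 0 and z1·z2·z3·z4 = 0, where z1 = (a3-a6+a7)^2 - |b-w|^2, z2 = (a3+a6+a7)^2 - |b-w|^2, z3 = (a3+a6-a7)^2 - |b-w|^2, and z4 = (a3-a6-a7)^2 - |b-w|^2. -/

import Mathlib

/-- The Jacobian matrix of a map `f : ℝ^n → ℝ^m` at a point `x`,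
whose `(i, j)` entry is the partial derivative of the `i`-th component of `f`
with respect to the `j`-th variable. -/
noncomputable def jacobian {n m : ℕ} (f : (Fin n → ℝ) → Fin m → ℝ) (x : Fin n → ℝ) :
    Matrix (Fin m) (Fin n) ℝ :=
  Matrix.of fun i j => fderiv ℝ (fun y => f y i) x (Pi.single j 1)

/-- The constraint map `H : ℝ^6 → ℝ^5` of the subsystem 367, in the variables
`(c3, s3, c6, s6, c7, s7)`. -/
noncomputable def H367 (a3 a6 a7 b1 b2 w1 w2 : ℝ) (x : Fin 6 → ℝ) : Fin 5 → ℝ :=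
  ![a6 * (x 2 * x 4 - x 3 * x 5) + a7 * x 5 - a3 * x 1 + w1 - b1,
    a6 * (x 3 * x 4 + x 2 * x 5) - a7 * x 4 + a3 * x 0 + w2 - b2,
    x 0 ^ 2 + x 1 ^ 2 - 1,
    x 2 ^ 2 + x 3 ^ 2 - 1,
    x 4 ^ 2 + x 5 ^ 2 - 1]

lemma cons_val_five' {α : Type*} (a b c d e f : α) : ![a,b,c,d,e,f] 5 = f := by
  rw [show (5 : Fin 6) = (4 : Fin 5).succ from rfl, Matrix.cons_val_succ]
  simp

lemma jac367 (a3 a6 a7 b1 b2 w1 w2 : ℝ) (x : Fin 6 → ℝ) :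
    jacobian (H367 a3 a6 a7 b1 b2 w1 w2) x =
    !![0, -a3, a6 * x 4, -(a6 * x 5), a6 * x 2, a7 - a6 * x 3;
       a3, 0, a6 * x 5, a6 * x 4, a6 * x 3 - a7, a6 * x 2;
       2 * x 0, 2 * x 1, 0, 0, 0, 0;
       0, 0, 2 * x 2, 2 * x 3, 0, 0;
       0, 0, 0, 0, 2 * x 4, 2 * x 5] := by
  have h0 := (((((hasFDerivAt_apply (𝕜 := ℝ) (2:Fin 6) x).mul
      (hasFDerivAt_apply (𝕜 := ℝ) (4:Fin 6) x)).sub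
      ((hasFDerivAt_apply (𝕜 := ℝ) (3:Fin 6) x).mul
      (hasFDerivAt_apply (𝕜 := ℝ) (5:Fin 6) x))).const_mul a6).add
      ((hasFDerivAt_apply (𝕜 := ℝ) (5:Fin 6) x).const_mul a7)).sub
      ((hasFDerivAt_apply (𝕜 := ℝ) (1:Fin 6) x).const_mul a3) |>.add_const w1 |>.sub_const b1
  have h1 := (((((hasFDerivAt_apply (𝕜 := ℝ) (3:Fin 6) x).mul
      (hasFDerivAt_apply (𝕜 := ℝ) (4:Fin 6) x)).add
      ((hasFDerivAt_apply (𝕜 := ℝ) (2:Fin 6) x).mul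
      (hasFDerivAt_apply (𝕜 := ℝ) (5:Fin 6) x))).const_mul a6).sub
      ((hasFDerivAt_apply (𝕜 := ℝ) (4:Fin 6) x).const_mul a7)).add
      ((hasFDerivAt_apply (𝕜 := ℝ) (0:Fin 6) x).const_mul a3) |>.add_const w2 |>.sub_const b2
  have h2 := ((hasFDerivAt_apply (𝕜 := ℝ) (0:Fin 6) x).mul
      (hasFDerivAt_apply (𝕜 := ℝ) (0:Fin 6) x)).add
      ((hasFDerivAt_apply (𝕜 := ℝ) (1:Fin 6) x).mul
      (hasFDerivAt_apply (𝕜 := ℝ) (1:Fin 6) x)) |>.sub_const 1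
  have h3 := ((hasFDerivAt_apply (𝕜 := ℝ) (2:Fin 6) x).mul
      (hasFDerivAt_apply (𝕜 := ℝ) (2:Fin 6) x)).add
      ((hasFDerivAt_apply (𝕜 := ℝ) (3:Fin 6) x).mul
      (hasFDerivAt_apply (𝕜 := ℝ) (3:Fin 6) x)) |>.sub_const 1
  have h4 := ((hasFDerivAt_apply (𝕜 := ℝ) (4:Fin 6) x).mul
      (hasFDerivAt_apply (𝕜 := ℝ) (4:Fin 6) x)).add
      ((hasFDerivAt_apply (𝕜 := ℝ) (5:Fin 6) x).mul
      (hasFDerivAt_apply (𝕜 := ℝ) (5:Fin 6) x)) |>.sub_const 1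
  simp only [← pow_two] at h2 h3 h4
  ext i j
  fin_cases i
  · show fderiv ℝ (fun y : Fin 6 → ℝ => a6 * (y 2 * y 4 - y 3 * y 5) + a7 * y 5 - a3 * y 1 + w1 - b1) x (Pi.single j 1) = ![0, -a3, a6 * x 4, -(a6 * x 5), a6 * x 2, a7 - a6 * x 3] j
    rw [HasFDerivAt.fderiv (f := fun y : Fin 6 → ℝ => a6 * (y 2 * y 4 - y 3 * y 5) + a7 * y 5 - a3 * y 1 + w1 - b1) h0]; fin_cases j <;> simp [Pi.single_apply, cons_val_five'] <;> ring
  · show fderiv ℝ (fun y : Fin 6 → ℝ => a6 * (y 3 * y 4 + y 2 * y 5) - a7 * y 4 + a3 * y 0 + w2 - b2) x (Pi.single j 1) = ![a3, 0, a6 * x 5, a6 * x 4, a6 * x 3 - a7, a6 * x 2] j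
    rw [HasFDerivAt.fderiv (f := fun y : Fin 6 → ℝ => a6 * (y 3 * y 4 + y 2 * y 5) - a7 * y 4 + a3 * y 0 + w2 - b2) h1]; fin_cases j <;> simp [Pi.single_apply, cons_val_five'] <;> ring
  · show fderiv ℝ (fun y : Fin 6 → ℝ => y 0 ^ 2 + y 1 ^ 2 - 1) x (Pi.single j 1) = ![2 * x 0, 2 * x 1, 0, 0, 0, 0] j
    rw [HasFDerivAt.fderiv (f := fun y : Fin 6 → ℝ => y 0 ^ 2 + y 1 ^ 2 - 1) h2]; fin_cases j <;> simp [Pi.single_apply, cons_val_five'] <;> ring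
  · show fderiv ℝ (fun y : Fin 6 → ℝ => y 2 ^ 2 + y 3 ^ 2 - 1) x (Pi.single j 1) = ![0, 0, 2 * x 2, 2 * x 3, 0, 0] j
    rw [HasFDerivAt.fderiv (f := fun y : Fin 6 → ℝ => y 2 ^ 2 + y 3 ^ 2 - 1) h3]; fin_cases j <;> simp [Pi.single_apply, cons_val_five'] <;> ring
  · show fderiv ℝ (fun y : Fin 6 → ℝ => y 4 ^ 2 + y 5 ^ 2 - 1) x (Pi.single j 1) = ![0, 0, 0, 0, 2 * x 4, 2 * x 5] j
    rw [HasFDerivAt.fderiv (f := fun y : Fin 6 → ℝ => y 4 ^ 2 + y 5 ^ 2 - 1) h4]; fin_cases j <;> simp [Pi.single_apply, cons_val_five'] <;> ring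
open Module Matrix
lemma exists_vecMul_zero {M : Matrix (Fin 5) (Fin 6) ℝ} (h : M.rank < 5) :
    ∃ v : Fin 5 → ℝ, v ≠ 0 ∧ v ᵥ* M = 0 := by
  by_contra hc
  push_neg at hc
  have hinj : Function.Injective Mᵀ.mulVecLin := by
    rw [← LinearMap.ker_eq_bot, LinearMap.ker_eq_bot']
    intro v hv
    by_contra hv0
    exact hc v hv0 (by rwa [Matrix.mulVecLin_apply, Matrix.mulVec_transpose] at hv)
  have := LinearMap.finrank_range_of_inj hinj
  have h5 : finrank ℝ (Fin 5 → ℝ) = 5 := by simp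
  rw [← Matrix.rank_transpose] at h
  unfold Matrix.rank at h
  omega


set_option maxHeartbeats 2000000 in
/-- At every singular configuration of the subsystem 367 one has
`a6*a7*c6 = 0` and `z1*z2*z3*z4 = 0`. -/
theorem singular367_product_eq_zero (a3 a6 a7 b1 b2 w1 w2 : ℝ) (x : Fin 6 → ℝ)
    (hH : H367 a3 a6 a7 b1 b2 w1 w2 x = 0)
    (hrank : (jacobian (H367 a3 a6 a7 b1 b2 w1 w2) x).rank < 5) :
    a6 * a7 * x 2 = 0 ∧
    ((a3 - a6 + a7) ^ 2 - ((b1 - w1) ^ 2 + (b2 - w2) ^ 2)) *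
      ((a3 + a6 + a7) ^ 2 - ((b1 - w1) ^ 2 + (b2 - w2) ^ 2)) *
      ((a3 + a6 - a7) ^ 2 - ((b1 - w1) ^ 2 + (b2 - w2) ^ 2)) *
      ((a3 - a6 - a7) ^ 2 - ((b1 - w1) ^ 2 + (b2 - w2) ^ 2)) = 0 := by
  obtain ⟨v, hv0, hv⟩ := exists_vecMul_zero hrank
  rw [jac367] at hv
  have h1eq : a6 * (x 2 * x 4 - x 3 * x 5) + a7 * x 5 - a3 * x 1 + w1 - b1 = 0 := congrFun hH 0
  have h2eq : a6 * (x 3 * x 4 + x 2 * x 5) - a7 * x 4 + a3 * x 0 + w2 - b2 = 0 := congrFun hH 1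
  have hu3 : x 0 ^ 2 + x 1 ^ 2 - 1 = 0 := congrFun hH 2
  have hu6 : x 2 ^ 2 + x 3 ^ 2 - 1 = 0 := congrFun hH 3
  have hu7 : x 4 ^ 2 + x 5 ^ 2 - 1 = 0 := congrFun hH 4
  have e0 := congrFun hv 0
  have e1 := congrFun hv 1
  have e2 := congrFun hv 2
  have e3 := congrFun hv 3
  have e4 := congrFun hv 4
  have e5 := congrFun hv 5
  simp [Matrix.vecMul, dotProduct, Fin.sum_univ_five, cons_val_five', Matrix.vecHead, Matrix.vecTail, Function.comp] at e0 e1 e2 e3 e4 e5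
  -- nondegeneracy of (v 0, v 1)
  have hL : v 0 ^ 2 + v 1 ^ 2 ≠ 0 := by
    intro hL0
    have h0 : v 0 = 0 := by nlinarith [sq_nonneg (v 0), sq_nonneg (v 1)]
    have h1 : v 1 = 0 := by nlinarith [sq_nonneg (v 0), sq_nonneg (v 1)]
    have hv2 : v 2 = 0 := by
      linear_combination (x 0/2)*e0 + (x 1/2)*e1 - v 2*hu3 - (a3*x 0/2)*h1 + (a3*x 1/2)*h0
    have hv3 : v 3 = 0 := by
      linear_combination (x 2/2)*e2 + (x 3/2)*e3 - v 3*hu6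
        - (a6*(x 4*x 2 - x 5*x 3)/2)*h0 - (a6*(x 5*x 2 + x 4*x 3)/2)*h1
    have hv4 : v 4 = 0 := by
      linear_combination (x 4/2)*e4 + (x 5/2)*e5 - v 4*hu7
        - ((a6*x 2*x 4 + (a7 - a6*x 3)*x 5)/2)*h0 - (((a6*x 3 - a7)*x 4 + a6*x 2*x 5)/2)*h1
    apply hv0
    funext i
    fin_cases i
    · exact h0
    · exact h1
    · exact hv2
    · exact hv3
    · exact hv4
  have hA : a3 * (v 0 * x 0 + v 1 * x 1) = 0 := by linear_combination x 1 * e0 - x 0 * e1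
  have hB : a6 * (v 0 * (x 3*x 4 + x 2*x 5) + v 1 * (x 3*x 5 - x 2*x 4)) = 0 := by
    linear_combination x 3 * e2 - x 2 * e3
  have hC : a7 * (v 0 * x 4 + v 1 * x 5) = 0 := by
    linear_combination hB - x 5 * e4 + x 4 * e5
  -- Part 1
  have hP1 : a6 * a7 * x 2 = 0 := by
    by_cases h6 : a6 = 0
    · simp [h6]
    by_cases h7 : a7 = 0
    · simp [h7]
    have hB' : v 0 * (x 3*x 4 + x 2*x 5) + v 1 * (x 3*x 5 - x 2*x 4) = 0 :=
      (mul_eq_zero.mp hB).resolve_left h6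
    have hC' : v 0 * x 4 + v 1 * x 5 = 0 := (mul_eq_zero.mp hC).resolve_left h7
    have hc6 : x 2 * (v 0 * x 5 - v 1 * x 4) = 0 := by linear_combination hB' - x 3 * hC'
    rcases mul_eq_zero.mp hc6 with h | h
    · rw [h]; ring
    · exfalso; apply hL
      have hv0' : v 0 = 0 := by linear_combination x 4 * hC' + x 5 * h - v 0 * hu7
      have hv1' : v 1 = 0 := by linear_combination x 5 * hC' - x 4 * h - v 1 * hu7
      rw [hv0', hv1']; norm_num
  refine ⟨hP1, ?_⟩
  -- the distance identity
  have hD : (b1 - w1) ^ 2 + (b2 - w2) ^ 2 =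
      a3^2 + a6^2 + a7^2 - 2*a6*a7*x 3
        + 2*a3*a6*(x 3*x 4*x 0 + x 2*x 5*x 0 - x 2*x 4*x 1 + x 3*x 5*x 1)
        - 2*a3*a7*(x 0*x 4 + x 1*x 5) := by
    linear_combination (-(b1 - w1 + a6*(x 2*x 4 - x 3*x 5) + a7*x 5 - a3*x 1)) * h1eq
      + (-(b2 - w2 + a6*(x 3*x 4 + x 2*x 5) - a7*x 4 + a3*x 0)) * h2eq
      + a3^2*hu3 + (a6^2*(x 4^2 + x 5^2))*hu6 + (a6^2 + a7^2 - 2*a6*a7*x 3)*hu7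
  by_cases ha3 : a3 = 0
  · by_cases h67 : a6 * a7 = 0
    · have hz : (a3 - a6 + a7) ^ 2 - ((b1 - w1) ^ 2 + (b2 - w2) ^ 2) = 0 := by
        linear_combination (-1)*hD
          + (-2*a6 + 2*a7 - 2*a6*(x 3*x 4*x 0 + x 2*x 5*x 0 - x 2*x 4*x 1 + x 3*x 5*x 1)
              + 2*a7*(x 0*x 4 + x 1*x 5))*ha3
          + (2*x 3 - 2)*h67
      rw [hz]; ring
    · have hc6 : x 2 = 0 := (mul_eq_zero.mp hP1).resolve_left h67
      have hs6 : (x 3 - 1) * (x 3 + 1) = 0 := by linear_combination hu6 - x 2 * hc6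
      rcases mul_eq_zero.mp hs6 with h | h
      · have hz : (a3 - a6 + a7) ^ 2 - ((b1 - w1) ^ 2 + (b2 - w2) ^ 2) = 0 := by
          linear_combination (-1)*hD
            + (-2*a6 + 2*a7 - 2*a6*(x 3*x 4*x 0 + x 2*x 5*x 0 - x 2*x 4*x 1 + x 3*x 5*x 1)
                + 2*a7*(x 0*x 4 + x 1*x 5))*ha3
            + (2*a6*a7)*h
        rw [hz]; ring
      · have hz : (a3 + a6 + a7) ^ 2 - ((b1 - w1) ^ 2 + (b2 - w2) ^ 2) = 0 := by
          linear_combination (-1)*hD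
            + (2*a6 + 2*a7 - 2*a6*(x 3*x 4*x 0 + x 2*x 5*x 0 - x 2*x 4*x 1 + x 3*x 5*x 1)
                + 2*a7*(x 0*x 4 + x 1*x 5))*ha3
            + (2*a6*a7)*h
        rw [hz]; ring
  · have hA' : v 0 * x 0 + v 1 * x 1 = 0 := (mul_eq_zero.mp hA).resolve_left ha3
    by_cases h6 : a6 = 0
    · by_cases h7 : a7 = 0
      · have hz : (a3 + a6 + a7) ^ 2 - ((b1 - w1) ^ 2 + (b2 - w2) ^ 2) = 0 := by
          linear_combination (-1)*hD
            + (2*a3 + 2*a7 + 2*a7*x 3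
                - 2*a3*(x 3*x 4*x 0 + x 2*x 5*x 0 - x 2*x 4*x 1 + x 3*x 5*x 1))*h6
            + (2*a3 + 2*a3*(x 0*x 4 + x 1*x 5))*h7
        rw [hz]; ring
      · have hC' : v 0 * x 4 + v 1 * x 5 = 0 := (mul_eq_zero.mp hC).resolve_left h7
        have hv0c : v 0 * (x 0*x 5 - x 1*x 4) = 0 := by linear_combination x 5 * hA' - x 1 * hC'
        have hv1c : v 1 * (x 0*x 5 - x 1*x 4) = 0 := by linear_combination x 0 * hC' - x 4 * hA'
        have hcross : x 0*x 5 - x 1*x 4 = 0 := by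
          by_contra hne
          have h0 := (mul_eq_zero.mp hv0c).resolve_right hne
          have h1 := (mul_eq_zero.mp hv1c).resolve_right hne
          exact hL (by rw [h0, h1]; norm_num)
        have hQ : ((x 0*x 4 + x 1*x 5) - 1) * ((x 0*x 4 + x 1*x 5) + 1) = 0 := by
          linear_combination (-(x 0*x 5 - x 1*x 4))*hcross + (x 4^2 + x 5^2)*hu3 + hu7
        rcases mul_eq_zero.mp hQ with hq | hq
        · have hz : (a3 - a6 - a7) ^ 2 - ((b1 - w1) ^ 2 + (b2 - w2) ^ 2) = 0 := by
            linear_combination (-1)*hD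
              + (-2*a3 + 2*a7 + 2*a7*x 3
                  - 2*a3*(x 3*x 4*x 0 + x 2*x 5*x 0 - x 2*x 4*x 1 + x 3*x 5*x 1))*h6
              + (2*a3*a7)*hq
          rw [hz]; ring
        · have hz : (a3 + a6 + a7) ^ 2 - ((b1 - w1) ^ 2 + (b2 - w2) ^ 2) = 0 := by
            linear_combination (-1)*hD
              + (2*a3 + 2*a7 + 2*a7*x 3
                  - 2*a3*(x 3*x 4*x 0 + x 2*x 5*x 0 - x 2*x 4*x 1 + x 3*x 5*x 1))*h6
              + (2*a3*a7)*hq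
          rw [hz]; ring
    · by_cases h7 : a7 = 0
      · have hB' : v 0 * (x 3*x 4 + x 2*x 5) + v 1 * (x 3*x 5 - x 2*x 4) = 0 :=
          (mul_eq_zero.mp hB).resolve_left h6
        have hv0c : v 0 * ((x 3*x 4 + x 2*x 5)*x 1 + (x 2*x 4 - x 3*x 5)*x 0) = 0 := by
          linear_combination x 1 * hB' + (x 2*x 4 - x 3*x 5) * hA'
        have hv1c : v 1 * ((x 3*x 4 + x 2*x 5)*x 1 + (x 2*x 4 - x 3*x 5)*x 0) = 0 := by
          linear_combination (x 3*x 4 + x 2*x 5) * hA' - x 0 * hB'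
        have hcross : (x 3*x 4 + x 2*x 5)*x 1 + (x 2*x 4 - x 3*x 5)*x 0 = 0 := by
          by_contra hne
          have h0 := (mul_eq_zero.mp hv0c).resolve_right hne
          have h1 := (mul_eq_zero.mp hv1c).resolve_right hne
          exact hL (by rw [h0, h1]; norm_num)
        have hP : ((x 3*x 4*x 0 + x 2*x 5*x 0 - x 2*x 4*x 1 + x 3*x 5*x 1) - 1)
            * ((x 3*x 4*x 0 + x 2*x 5*x 0 - x 2*x 4*x 1 + x 3*x 5*x 1) + 1) = 0 := by
          linear_combination (-((x 3*x 4 + x 2*x 5)*x 1 + (x 2*x 4 - x 3*x 5)*x 0))*hcross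
            + ((x 4^2 + x 5^2)*(x 0^2 + x 1^2))*hu6 + (x 0^2 + x 1^2)*hu7 + hu3
        rcases mul_eq_zero.mp hP with hp | hp
        · have hz : (a3 + a6 - a7) ^ 2 - ((b1 - w1) ^ 2 + (b2 - w2) ^ 2) = 0 := by
            linear_combination (-1)*hD
              + (-2*a3 - 2*a6 + 2*a6*x 3 + 2*a3*(x 0*x 4 + x 1*x 5))*h7
              + (-2*a3*a6)*hp
          rw [hz]; ring
        · have hz : (a3 - a6 + a7) ^ 2 - ((b1 - w1) ^ 2 + (b2 - w2) ^ 2) = 0 := by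
            linear_combination (-1)*hD
              + (2*a3 - 2*a6 + 2*a6*x 3 + 2*a3*(x 0*x 4 + x 1*x 5))*h7
              + (-2*a3*a6)*hp
          rw [hz]; ring
      · -- a3 ≠ 0, a6 ≠ 0, a7 ≠ 0
        have hc6 : x 2 = 0 := (mul_eq_zero.mp hP1).resolve_left (mul_ne_zero h6 h7)
        have hs6 : (x 3 - 1) * (x 3 + 1) = 0 := by linear_combination hu6 - x 2 * hc6
        have hC' : v 0 * x 4 + v 1 * x 5 = 0 := (mul_eq_zero.mp hC).resolve_left h7
        have hv0c : v 0 * (x 0*x 5 - x 1*x 4) = 0 := by linear_combination x 5 * hA' - x 1 * hC'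
        have hv1c : v 1 * (x 0*x 5 - x 1*x 4) = 0 := by linear_combination x 0 * hC' - x 4 * hA'
        have hcross : x 0*x 5 - x 1*x 4 = 0 := by
          by_contra hne
          have h0 := (mul_eq_zero.mp hv0c).resolve_right hne
          have h1 := (mul_eq_zero.mp hv1c).resolve_right hne
          exact hL (by rw [h0, h1]; norm_num)
        have hQ : ((x 0*x 4 + x 1*x 5) - 1) * ((x 0*x 4 + x 1*x 5) + 1) = 0 := by
          linear_combination (-(x 0*x 5 - x 1*x 4))*hcross + (x 4^2 + x 5^2)*hu3 + hu7
        rcases mul_eq_zero.mp hs6 with h | h <;> rcases mul_eq_zero.mp hQ with hq | hq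
        · -- s6 = 1, Q = 1 : σ6 = 1, σ7 = -1, kill z3
          have hz : (a3 + a6 - a7) ^ 2 - ((b1 - w1) ^ 2 + (b2 - w2) ^ 2) = 0 := by
            linear_combination (-1)*hD + (2*a6*a7 - 2*a3*a6)*h + (2*a3*a7 - 2*a3*a6*x 3)*hq
              + (-2*a3*a6*(x 5*x 0 - x 4*x 1))*hc6
          rw [hz]; ring
        · -- s6 = 1, Q = -1 : σ6 = -1, σ7 = 1, kill z1
          have hz : (a3 - a6 + a7) ^ 2 - ((b1 - w1) ^ 2 + (b2 - w2) ^ 2) = 0 := by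
            linear_combination (-1)*hD + (2*a6*a7 + 2*a3*a6)*h + (2*a3*a7 - 2*a3*a6*x 3)*hq
              + (-2*a3*a6*(x 5*x 0 - x 4*x 1))*hc6
          rw [hz]; ring
        · -- s6 = -1, Q = 1 : σ6 = -1, σ7 = -1, kill z4
          have hz : (a3 - a6 - a7) ^ 2 - ((b1 - w1) ^ 2 + (b2 - w2) ^ 2) = 0 := by
            linear_combination (-1)*hD + (2*a6*a7 - 2*a3*a6)*h + (2*a3*a7 - 2*a3*a6*x 3)*hq
              + (-2*a3*a6*(x 5*x 0 - x 4*x 1))*hc6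
          rw [hz]; ring
        · -- s6 = -1, Q = -1 : σ6 = 1, σ7 = 1, kill z2
          have hz : (a3 + a6 + a7) ^ 2 - ((b1 - w1) ^ 2 + (b2 - w2) ^ 2) = 0 := by
            linear_combination (-1)*hD + (2*a6*a7 + 2*a3*a6)*h + (2*a3*a7 - 2*a3*a6*x 3)*hq
              + (-2*a3*a6*(x 5*x 0 - x 4*x 1))*hc6
          rw [hz]; ring
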